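/- Let λ > 0 and let q : ℝ → Quaternion ℝ be differentiable with ‖q(t)‖ = 1 for all t and satisfy q'(t) = (1/2) · q(t) * ⟦−λ · q⃗(t)⟧ (i.e., the sliding feedback with the sgn₊ factor omitted). Then d/dt ‖q⃗(t)‖² = −λ · q°(t) · ‖q⃗(t)‖². In particular, whenever q°(t) < 0 and q⃗(t) ≠ 0, ‖q⃗‖² is strictly increasing, so the identity quaternion representative with negative real part is repelling and the unwinding phenomenon occurs. -/

import Mathlib

noncomputable section

/-- The vector (imaginary) part of a quaternion, as a vector in Euclidean `ℝ³`. -/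
def vecPart (p : Quaternion ℝ) : EuclideanSpace ℝ (Fin 3) := WithLp.toLp 2 ![p.imI, p.imJ, p.imK]

/-- The pure-imaginary quaternion `⟦v⟧` with vector part `v`. -/
def quatOfVec (v : EuclideanSpace ℝ (Fin 3)) : Quaternion ℝ := ⟨0, v 0, v 1, v 2⟩

lemma norm_sq_vecPart (p : Quaternion ℝ) :
    ‖vecPart p‖ ^ 2 = p.imI ^ 2 + p.imJ ^ 2 + p.imK ^ 2 := by
  have h := EuclideanSpace.norm_eq (vecPart p)
  rw [h, Real.sq_sqrt (by positivity)]
  simp [vecPart, Fin.sum_univ_three, sq_abs]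

theorem unwinding_without_sgnPlus
    (lam : ℝ) (hlam : 0 < lam) (q : ℝ → Quaternion ℝ)
    (hq : Differentiable ℝ q)
    (hunit : ∀ t : ℝ, ‖q t‖ = 1)
    (hdyn : ∀ t : ℝ, deriv q t =
      (1 / 2 : ℝ) • (q t * quatOfVec ((-lam) • vecPart (q t)))) :
    (∀ t : ℝ, HasDerivAt (fun τ => ‖vecPart (q τ)‖ ^ 2)
        (-(lam * (q t).re * ‖vecPart (q t)‖ ^ 2)) t) ∧
      ∀ t : ℝ, (q t).re < 0 → vecPart (q t) ≠ 0 →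
        0 < deriv (fun τ => ‖vecPart (q τ)‖ ^ 2) t := by
  have hmain : ∀ t : ℝ, HasDerivAt (fun τ => ‖vecPart (q τ)‖ ^ 2)
      (-(lam * (q t).re * ‖vecPart (q t)‖ ^ 2)) t := by
    intro t
    -- component continuous linear maps
    let LI : Quaternion ℝ →L[ℝ] ℝ :=
      LinearMap.toContinuousLinearMap (QuaternionAlgebra.imIₗ _ _ _)
    let LJ : Quaternion ℝ →L[ℝ] ℝ :=
      LinearMap.toContinuousLinearMap (QuaternionAlgebra.imJₗ _ _ _)
    let LK : Quaternion ℝ →L[ℝ] ℝ :=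
      LinearMap.toContinuousLinearMap (QuaternionAlgebra.imKₗ _ _ _)
    have hqd := (hq t).hasDerivAt
    have hI : HasDerivAt (fun τ => (q τ).imI) ((deriv q t).imI) t :=
      (LI.hasFDerivAt.comp_hasDerivAt t hqd)
    have hJ : HasDerivAt (fun τ => (q τ).imJ) ((deriv q t).imJ) t :=
      (LJ.hasFDerivAt.comp_hasDerivAt t hqd)
    have hK : HasDerivAt (fun τ => (q τ).imK) ((deriv q t).imK) t :=
      (LK.hasFDerivAt.comp_hasDerivAt t hqd)
    set a := (q t).re
    set b := (q t).imI
    set c := (q t).imJ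
    set d := (q t).imK
    have hIc : (deriv q t).imI = -(lam * a * b) / 2 := by
      rw [hdyn t]
      rw [Quaternion.imI_smul, Quaternion.imI_mul]
      simp [quatOfVec, vecPart, Quaternion.imI_mul]
      ring
    have hJc : (deriv q t).imJ = -(lam * a * c) / 2 := by
      rw [hdyn t]
      rw [Quaternion.imJ_smul, Quaternion.imJ_mul]
      simp [quatOfVec, vecPart, Quaternion.imJ_mul]
      ring
    have hKc : (deriv q t).imK = -(lam * a * d) / 2 := by
      rw [hdyn t]
      rw [Quaternion.imK_smul, Quaternion.imK_mul]
      simp [quatOfVec, vecPart, Quaternion.imK_mul]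
      ring
    have h : HasDerivAt (fun τ => (q τ).imI ^ 2 + (q τ).imJ ^ 2 + (q τ).imK ^ 2)
        (-(lam * a * (b ^ 2 + c ^ 2 + d ^ 2))) t := by
      have := ((hI.fun_pow 2).fun_add (hJ.fun_pow 2)).fun_add (hK.fun_pow 2)
      refine this.congr_deriv ?_
      rw [hIc, hJc, hKc]
      ring
    have heq : (fun τ => ‖vecPart (q τ)‖ ^ 2)
        = fun τ => (q τ).imI ^ 2 + (q τ).imJ ^ 2 + (q τ).imK ^ 2 := by
      funext τ; exact norm_sq_vecPart (q τ)
    rw [heq, norm_sq_vecPart]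
    exact h
  refine ⟨hmain, fun t hre hne => ?_⟩
  rw [(hmain t).deriv]
  have hpos : 0 < ‖vecPart (q t)‖ ^ 2 := pow_pos (norm_pos_iff.mpr hne) 2
  nlinarith [mul_pos (mul_pos hlam (neg_pos.mpr hre)) hpos]
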